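/- For every even q ≥ 2 and every 3-uniform hypergraph G not in U, r(G;q) > 2^{2^{q/2}}. -/

import Mathlib

/-- A 3-uniform hypergraph with vertices drawn from ℕ. -/
structure ThreeGraph where
  verts : Finset ℕ
  edges : Finset (Finset ℕ)
  edge_card : ∀ e ∈ edges, e.card = 3
  edge_sub : ∀ e ∈ edges, e ⊆ verts

/-- A 3-graph is tripartite if its vertex set can be partitioned into three parts so that
every edge has exactly one vertex in each part. -/
def Tripartite (G : ThreeGraph) : Prop :=
  ∃ V1 V2 V3 : Finset ℕ,
    Disjoint V1 V2 ∧ Disjoint V1 V3 ∧ Disjoint V2 V3 ∧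
    V1 ∪ V2 ∪ V3 = G.verts ∧
    ∀ e ∈ G.edges, (e ∩ V1).card = 1 ∧ (e ∩ V2).card = 1 ∧ (e ∩ V3).card = 1

/-- Membership in the family 𝒰₁: there is a vertex subset intersecting every edge in
exactly one vertex. -/
def InU1 (G : ThreeGraph) : Prop :=
  ∃ W : Finset ℕ, W ⊆ G.verts ∧ ∀ e ∈ G.edges, (e ∩ W).card = 1

/-- `Reducible G H F` : `G` is reducible to the pair `(H, F)` by collapsing a collapsible
set `U` (with `F = G[U]`), where the new vertex of `H` is `v`. -/
def Reducible (G H F : ThreeGraph) : Prop :=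
  ∃ (U : Finset ℕ) (v : ℕ),
    U ⊆ G.verts ∧ 2 ≤ U.card ∧ U.card < G.verts.card ∧
    (∀ e ∈ G.edges, (e ∩ U).card ≠ 2) ∧
    v ∉ G.verts ∧
    H.verts = (G.verts \ U) ∪ {v} ∧
    H.edges = G.edges.filter (fun e => e ∩ U = ∅) ∪
      (G.edges.filter (fun e => (e ∩ U).card = 1)).image (fun e => (e \ U) ∪ {v}) ∧
    F.verts = U ∧
    F.edges = G.edges.filter (fun e => e ⊆ U)

/-- `MemU i G` means `G ∈ 𝒰ᵢ`: `𝒰₀` is the family of tripartite 3-graphs, `𝒰₁` of 3-graphs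
with a vertex set meeting every edge exactly once, the families are nested, and for `i ≥ 2`,
`G ∈ 𝒰ᵢ` whenever `G` is reducible to `(H, F)` with `H ∈ 𝒰ᵢ₋₁` and `F ∈ 𝒰ᵢ`. -/
inductive MemU : ℕ → ThreeGraph → Prop where
  | zero (G : ThreeGraph) : Tripartite G → MemU 0 G
  | one (G : ThreeGraph) : InU1 G → MemU 1 G
  | mono (i : ℕ) (G : ThreeGraph) : MemU i G → MemU (i + 1) G
  | reduce (i : ℕ) (G H F : ThreeGraph) :
      Reducible G H F → MemU (i + 1) H → MemU (i + 2) F → MemU (i + 2) G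

/-- `G ∈ 𝒰 = ⋃ᵢ 𝒰ᵢ`. -/
def InU (G : ThreeGraph) : Prop := ∃ i, MemU i G

/-- A monochromatic copy of `G` in color `i` under the coloring `χ` of the triples of
`Fin N`. -/
def MonoCopy {N q : ℕ} (χ : Finset (Fin N) → Fin q) (i : Fin q) (G : ThreeGraph) : Prop :=
  ∃ f : ℕ → Fin N, Set.InjOn f ↑G.verts ∧ ∀ e ∈ G.edges, χ (e.image f) = i

/-- `N` vertices suffice to find, in any `q`-coloring, a monochromatic copy of `Gs i` in
color `i` for some `i`. -/
def RamseyProp {q : ℕ} (Gs : Fin q → ThreeGraph) (N : ℕ) : Prop :=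
  ∀ χ : Finset (Fin N) → Fin q, ∃ i : Fin q, MonoCopy χ i (Gs i)

/-- The Ramsey number `r(G₁, …, G_q)`. -/
noncomputable def ramseyNumber {q : ℕ} (Gs : Fin q → ThreeGraph) : ℕ :=
  sInf {N | RamseyProp Gs N}

/-- The `q`-color Ramsey number `r(G; q)`. -/
noncomputable def rq (G : ThreeGraph) (q : ℕ) : ℕ :=
  ramseyNumber (fun _ : Fin q => G)

-- ### helpers

lemma memU_mono_le {i j : ℕ} {G : ThreeGraph} (h : MemU i G) (hij : i ≤ j) : MemU j G := by
  induction j, hij using Nat.le_induction with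
  | base => exact h
  | succ n hn ih => exact MemU.mono n G ih

lemma inU_reduce {G H F : ThreeGraph} (hred : Reducible G H F) (hH : InU H) (hF : InU F) :
    InU G := by
  obtain ⟨a, ha⟩ := hH
  obtain ⟨b, hb⟩ := hF
  exact ⟨max a b + 2, MemU.reduce (max a b) G H F hred
    (memU_mono_le ha (by omega)) (memU_mono_le hb (by omega))⟩

lemma inU_of_edgeless {G : ThreeGraph} (h : G.edges = ∅) : InU G :=
  ⟨0, MemU.zero G ⟨G.verts, ∅, ∅, by simp, by simp, by simp, by simp, by simp [h]⟩⟩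

lemma inU_of_inU1 {G : ThreeGraph} (h : InU1 G) : InU G := ⟨1, MemU.one G h⟩

lemma triple_sorted {T : Finset ℕ} (h : T.card = 3) :
    ∃ x y z : ℕ, x < y ∧ y < z ∧ T = {x, y, z} := by
  obtain ⟨a, b, c, hab, hac, hbc, rfl⟩ := Finset.card_eq_three.mp h
  have comm1 : ∀ x y z : ℕ, ({x, y, z} : Finset ℕ) = {y, x, z} :=
    fun x y z => Finset.insert_comm x y {z}
  have comm2 : ∀ x y z : ℕ, ({x, y, z} : Finset ℕ) = {x, z, y} := by
    intro x y z; rw [Finset.pair_comm]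
  rcases Nat.lt_trichotomy a b with h1 | h1 | h1
  · rcases Nat.lt_trichotomy b c with h2 | h2 | h2
    · exact ⟨a, b, c, h1, h2, rfl⟩
    · exact (hbc h2).elim
    · rcases Nat.lt_trichotomy a c with h3 | h3 | h3
      · exact ⟨a, c, b, h3, h2, comm2 a b c⟩
      · exact (hac h3).elim
      · exact ⟨c, a, b, h3, h1, (comm2 a b c).trans (comm1 a c b)⟩
  · exact (hab h1).elim
  · rcases Nat.lt_trichotomy a c with h2 | h2 | h2
    · exact ⟨b, a, c, h1, h2, comm1 a b c⟩
    · exact (hac h2).elim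
    · rcases Nat.lt_trichotomy b c with h3 | h3 | h3
      · exact ⟨b, c, a, h3, h2, (comm1 a b c).trans (comm2 b a c)⟩
      · exact (hbc h3).elim
      · exact ⟨c, b, a, h3, h1, ((comm2 a b c).trans (comm1 a c b)).trans (comm2 c a b)⟩

lemma sorted_card3 {x y z : ℕ} (h1 : x < y) (h2 : y < z) : ({x,y,z} : Finset ℕ).card = 3 :=
  Finset.card_eq_three.mpr ⟨x, y, z, by omega, by omega, by omega, rfl⟩

lemma not_mem_verts_sup {G : ThreeGraph} : (G.verts.sup id) + 1 ∉ G.verts := by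
  intro hv
  have := Finset.le_sup (f := id) hv
  simp only [id] at this
  omega

/-- Graphs whose every edge consists of a "pair" at a common `g`-level together with a
single vertex at a strictly lower `g`-level are in `𝒰`. -/
lemma layered_inU (g : ℕ → ℕ) : ∀ (n : ℕ) (G : ThreeGraph), G.verts.card ≤ n →
    (∀ e ∈ G.edges, ∃ w ∈ e, (∀ u ∈ e, ∀ u' ∈ e, u ≠ w → u' ≠ w → g u = g u') ∧
      (∀ u ∈ e, u ≠ w → g w < g u)) → InU G := by
  intro n
  induction n with
  | zero =>
    intro G hcard _
    refine inU_of_edgeless (Finset.eq_empty_of_forall_notMem fun e he => ?_)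
    have h3 := G.edge_card e he
    have := Finset.card_le_card (G.edge_sub e he)
    omega
  | succ n IH =>
    intro G hcard hpat
    by_cases hE : G.edges = ∅
    · exact inU_of_edgeless hE
    obtain ⟨e₀, he₀⟩ := Finset.nonempty_iff_ne_empty.mpr hE
    have hvne : G.verts.Nonempty := by
      have h3 := G.edge_card e₀ he₀
      have hsub := G.edge_sub e₀ he₀
      obtain ⟨u, hu⟩ := Finset.card_pos.mp (by omega : 0 < e₀.card)
      exact ⟨u, hsub hu⟩
    obtain ⟨vM, hvM, hMmax⟩ := G.verts.exists_max_image g hvne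
    set M := g vM with hM
    set U := G.verts.filter (fun u => g u < M) with hU
    -- intersection of an edge with U is a filter
    have hinter : ∀ e ∈ G.edges, e ∩ U = e.filter (fun u => g u < M) := by
      intro e he
      ext u
      simp only [Finset.mem_inter, hU, Finset.mem_filter]
      exact ⟨fun ⟨h1, _, h3⟩ => ⟨h1, h3⟩, fun ⟨h1, h3⟩ => ⟨h1, G.edge_sub e he h1, h3⟩⟩
    -- structure of each edge
    have hkey : ∀ e ∈ G.edges, (∃ w ∈ e, e ∩ U = {w}) ∨ e ∩ U = e := by
      intro e he
      obtain ⟨w, hw, hconst, hless⟩ := hpat e he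
      have hcard2 : (e.erase w).card = 2 := by
        rw [Finset.card_erase_of_mem hw, G.edge_card e he]
      obtain ⟨p1, p2, hne, hpe⟩ := Finset.card_eq_two.mp hcard2
      have hp1 : p1 ∈ e.erase w := by rw [hpe]; simp
      have hp1e : p1 ∈ e := Finset.mem_of_mem_erase hp1
      have hp1w : p1 ≠ w := Finset.ne_of_mem_erase hp1
      have ha : ∀ u ∈ e, u ≠ w → g u = g p1 := fun u hu huw => hconst u hu p1 hp1e huw hp1w
      have haM : g p1 ≤ M := hMmax p1 (G.edge_sub e he hp1e)
      have hwlt : g w < g p1 := hless p1 hp1e hp1w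
      rcases eq_or_lt_of_le haM with haM | haM
      · left
        refine ⟨w, hw, ?_⟩
        rw [hinter e he]
        ext u
        simp only [Finset.mem_filter, Finset.mem_singleton]
        constructor
        · rintro ⟨hu, hlt⟩
          by_contra huw
          rw [ha u hu huw, haM] at hlt
          omega
        · rintro rfl
          exact ⟨hw, by omega⟩
      · right
        rw [hinter e he]
        apply Finset.filter_true_of_mem
        intro u hu
        by_cases huw : u = w
        · subst huw; omega
        · rw [ha u hu huw]; omega
    by_cases hU1 : U.card ≤ 1
    · -- no edge has e ∩ U = e (card 3 > 1), so all are singletons: InU1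
      refine inU_of_inU1 ⟨U, Finset.filter_subset _ _, fun e he => ?_⟩
      rcases hkey e he with ⟨w, _, hw⟩ | hw
      · rw [hw]; simp
      · exfalso
        have : e ⊆ U := by rw [← hw]; exact Finset.inter_subset_right
        have := Finset.card_le_card this
        rw [G.edge_card e he] at this
        omega
    · push_neg at hU1
      have hUsub : U ⊆ G.verts := Finset.filter_subset _ _
      have hUlt : U.card < G.verts.card :=
        Finset.card_lt_card ⟨hUsub, fun hsub => by
          have := hsub hvM
          rw [hU, Finset.mem_filter] at this
          omega⟩
      set v := (G.verts.sup id) + 1 with hv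
      have hvnot : v ∉ G.verts := not_mem_verts_sup
      have hvnotU : ∀ e ∈ G.edges, v ∉ e \ U := fun e he h =>
        hvnot (G.edge_sub e he (Finset.mem_sdiff.mp h).1)
      refine inU_reduce (G := G)
        (H := ⟨(G.verts \ U) ∪ {v},
          G.edges.filter (fun e => e ∩ U = ∅) ∪
            (G.edges.filter (fun e => (e ∩ U).card = 1)).image (fun e => (e \ U) ∪ {v}),
          ?hc, ?hs⟩)
        (F := ⟨U, G.edges.filter (fun e => e ⊆ U),
          fun e he => G.edge_card e (Finset.mem_filter.mp he).1,
          fun e he => (Finset.mem_filter.mp he).2⟩)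
        ⟨U, v, hUsub, hU1, hUlt, ?coll, hvnot, rfl, rfl, rfl, rfl⟩ ?hH ?hF
      case hc =>
        intro e' he'
        rcases Finset.mem_union.mp he' with h | h
        · exact G.edge_card e' (Finset.mem_filter.mp h).1
        · obtain ⟨e, he, rfl⟩ := Finset.mem_image.mp h
          have he1 := Finset.mem_filter.mp he
          have hsd : e \ U = e \ (e ∩ U) := (Finset.sdiff_inter_self_left e U).symm
          have hcsd : (e \ U).card = 2 := by
            rw [hsd, Finset.card_sdiff_of_subset Finset.inter_subset_left, he1.2,
              G.edge_card e he1.1]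
          rw [Finset.card_union_of_disjoint (by
            simp only [Finset.disjoint_singleton_right]
            exact hvnotU e he1.1), hcsd]
          simp
      case hs =>
        intro e' he'
        rcases Finset.mem_union.mp he' with h | h
        · have h1 := Finset.mem_filter.mp h
          intro u hu
          apply Finset.mem_union_left
          rw [Finset.mem_sdiff]
          refine ⟨G.edge_sub _ h1.1 hu, fun hUu => ?_⟩
          have : u ∈ e' ∩ U := Finset.mem_inter.mpr ⟨hu, hUu⟩
          rw [h1.2] at this
          exact absurd this (Finset.notMem_empty u)
        · obtain ⟨e, he, rfl⟩ := Finset.mem_image.mp h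
          have he1 := Finset.mem_filter.mp he
          intro u hu
          rcases Finset.mem_union.mp hu with h2 | h2
          · exact Finset.mem_union_left _ (Finset.mem_sdiff.mpr
              ⟨G.edge_sub _ he1.1 (Finset.mem_sdiff.mp h2).1, (Finset.mem_sdiff.mp h2).2⟩)
          · exact Finset.mem_union_right _ h2
      case coll =>
        intro e he
        rcases hkey e he with ⟨w, _, hw⟩ | hw
        · rw [hw]; simp
        · rw [hw, G.edge_card e he]; omega
      case hH =>
        refine inU_of_inU1 ⟨{v}, ?_, ?_⟩
        · intro u hu
          rw [Finset.mem_singleton] at hu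
          subst hu
          exact Finset.mem_union_right _ (Finset.mem_singleton_self v)
        · intro e' he'
          rcases Finset.mem_union.mp he' with h | h
          · exfalso
            have h1 := Finset.mem_filter.mp h
            rcases hkey e' h1.1 with ⟨w, _, hw⟩ | hw
            · rw [h1.2] at hw
              exact (Finset.singleton_ne_empty w) hw.symm
            · rw [h1.2] at hw
              have h3 := G.edge_card e' h1.1
              rw [← hw] at h3
              simp at h3
          · obtain ⟨e, he, rfl⟩ := Finset.mem_image.mp h
            have he1 := Finset.mem_filter.mp he
            have : ((e \ U) ∪ {v}) ∩ {v} = {v} := by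
              apply Finset.inter_eq_right.mpr
              intro u hu
              rw [Finset.mem_singleton] at hu
              subst hu
              exact Finset.mem_union_right _ (Finset.mem_singleton_self v)
            rw [this]
            simp
      case hF =>
        refine IH _ (by show U.card ≤ n; omega) ?_
        intro e he
        exact hpat e (Finset.mem_filter.mp he).1

def nsz (k : ℕ) : ℕ := 2 ^ 2 ^ (k + 1)

lemma nsz_pos (k : ℕ) : 0 < nsz k := pow_pos (by norm_num) _

lemma nsz_succ (k : ℕ) : nsz (k + 1) = nsz k * nsz k := by
  unfold nsz
  rw [← pow_add]
  congr 1
  ring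

def colT : ℕ → ℕ → ℕ → ℕ → ℕ
  | 0, x, _, _ => if x = 0 then 1 else 0
  | (k+1), x, y, z =>
      if x / nsz k = z / nsz k then colT k (x % nsz k) (y % nsz k) (z % nsz k)
      else if x / nsz k = y / nsz k then 2 * k + 3
      else if y / nsz k = z / nsz k then 2 * k + 2
      else colT k (x / nsz k) (y / nsz k) (z / nsz k)

lemma colT_lt : ∀ k x y z, colT k x y z < 2 * k + 2 := by
  intro k
  induction k with
  | zero =>
    intro x y z
    simp only [colT]
    split <;> omega
  | succ k IH =>
    intro x y z
    simp only [colT]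
    split
    · exact lt_trans (IH _ _ _) (by omega)
    split
    · omega
    split
    · omega
    · exact lt_trans (IH _ _ _) (by omega)

lemma colT_succ_cases {k x y z c : ℕ} (hx : x < y) (hy : y < z)
    (h : colT (k+1) x y z = c) :
    (x / nsz k = y / nsz k ∧ y / nsz k = z / nsz k ∧
      colT k (x % nsz k) (y % nsz k) (z % nsz k) = c) ∨
    (x / nsz k = y / nsz k ∧ z / nsz k ≠ x / nsz k ∧ c = 2*k+3) ∨
    (y / nsz k = z / nsz k ∧ x / nsz k ≠ y / nsz k ∧ c = 2*k+2) ∨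
    (x / nsz k ≠ y / nsz k ∧ y / nsz k ≠ z / nsz k ∧ x / nsz k ≠ z / nsz k ∧
      colT k (x / nsz k) (y / nsz k) (z / nsz k) = c) := by
  have hxy : x / nsz k ≤ y / nsz k := Nat.div_le_div_right hx.le
  have hyz : y / nsz k ≤ z / nsz k := Nat.div_le_div_right hy.le
  simp only [colT] at h
  split_ifs at h with h1 h2 h3
  · exact Or.inl ⟨by omega, by omega, h⟩
  · exact Or.inr (Or.inl ⟨h2, fun hz => h1 hz.symm, h.symm⟩)
  · exact Or.inr (Or.inr (Or.inl ⟨h3, fun hxy => h2 hxy, h.symm⟩))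
  · exact Or.inr (Or.inr (Or.inr ⟨h2, h3, h1, h⟩))

def colS (k : ℕ) (T : Finset ℕ) : ℕ :=
  colT k (WithTop.untopD 0 T.min) (WithTop.untopD 0 (T.erase (WithTop.untopD 0 T.min)).min) (WithBot.unbotD 0 T.max)

lemma colS_eq {k x y z : ℕ} (h1 : x < y) (h2 : y < z) :
    colS k {x, y, z} = colT k x y z := by
  have hmin : ({x, y, z} : Finset ℕ).min = (x : WithTop ℕ) := by
    rw [Finset.min_insert, Finset.min_insert, Finset.min_singleton,
      ← WithTop.coe_min, ← WithTop.coe_min]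
    norm_cast
    rw [min_eq_left h2.le, min_eq_left h1.le]
    rfl
  have herase : ({x, y, z} : Finset ℕ).erase x = {y, z} := by
    apply Finset.erase_insert
    simp only [Finset.mem_insert, Finset.mem_singleton]
    omega
  have hmin2 : ({y, z} : Finset ℕ).min = (y : WithTop ℕ) := by
    rw [Finset.min_insert, Finset.min_singleton, ← WithTop.coe_min]
    norm_cast
    rw [min_eq_left h2.le]
    rfl
  have hmax : ({x, y, z} : Finset ℕ).max = (z : WithBot ℕ) := by
    rw [Finset.max_insert, Finset.max_insert, Finset.max_singleton,
      ← WithBot.coe_max, ← WithBot.coe_max]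
    norm_cast
    rw [max_eq_right h2.le, max_eq_right (h1.trans h2).le]
    rfl
  unfold colS
  rw [hmin, show (WithTop.untopD 0 ((x:ℕ) : WithTop ℕ)) = x from rfl, herase, hmin2,
    show (WithTop.untopD 0 ((y:ℕ) : WithTop ℕ)) = y from rfl, hmax,
    show (WithBot.unbotD 0 ((z:ℕ) : WithBot ℕ)) = z from rfl]

-- ### collapse machinery

def collapseH (G : ThreeGraph) (U : Finset ℕ) (v : ℕ) (hv : v ∉ G.verts) : ThreeGraph where
  verts := (G.verts \ U) ∪ {v}
  edges := G.edges.filter (fun e => e ∩ U = ∅) ∪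
      (G.edges.filter (fun e => (e ∩ U).card = 1)).image (fun e => (e \ U) ∪ {v})
  edge_card := by
    intro e' he'
    rcases Finset.mem_union.mp he' with h | h
    · exact G.edge_card e' (Finset.mem_filter.mp h).1
    · obtain ⟨e, he, rfl⟩ := Finset.mem_image.mp h
      have he1 := Finset.mem_filter.mp he
      have hsd : e \ U = e \ (e ∩ U) := (Finset.sdiff_inter_self_left e U).symm
      have hcsd : (e \ U).card = 2 := by
        rw [hsd, Finset.card_sdiff_of_subset Finset.inter_subset_left, he1.2, G.edge_card e he1.1]
      rw [Finset.card_union_of_disjoint (by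
        simp only [Finset.disjoint_singleton_right]
        intro hvh
        exact hv (G.edge_sub e he1.1 (Finset.mem_sdiff.mp hvh).1)), hcsd]
      simp
  edge_sub := by
    intro e' he'
    rcases Finset.mem_union.mp he' with h | h
    · have h1 := Finset.mem_filter.mp h
      intro u hu
      apply Finset.mem_union_left
      rw [Finset.mem_sdiff]
      refine ⟨G.edge_sub _ h1.1 hu, fun hUu => ?_⟩
      have : u ∈ e' ∩ U := Finset.mem_inter.mpr ⟨hu, hUu⟩
      rw [h1.2] at this
      exact absurd this (Finset.notMem_empty u)
    · obtain ⟨e, he, rfl⟩ := Finset.mem_image.mp h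
      have he1 := Finset.mem_filter.mp he
      intro u hu
      rcases Finset.mem_union.mp hu with h2 | h2
      · exact Finset.mem_union_left _ (Finset.mem_sdiff.mpr
          ⟨G.edge_sub _ he1.1 (Finset.mem_sdiff.mp h2).1, (Finset.mem_sdiff.mp h2).2⟩)
      · exact Finset.mem_union_right _ h2

def collapseF (G : ThreeGraph) (U : Finset ℕ) : ThreeGraph where
  verts := U
  edges := G.edges.filter (fun e => e ⊆ U)
  edge_card := fun e he => G.edge_card e (Finset.mem_filter.mp he).1
  edge_sub := fun e he => (Finset.mem_filter.mp he).2

lemma collapse_inU {G : ThreeGraph} {U : Finset ℕ} {v : ℕ}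
    (hUsub : U ⊆ G.verts) (hU2 : 2 ≤ U.card) (hUlt : U.card < G.verts.card)
    (hcoll : ∀ e ∈ G.edges, (e ∩ U).card ≠ 2) (hv : v ∉ G.verts)
    (hH : InU (collapseH G U v hv)) (hF : InU (collapseF G U)) : InU G :=
  inU_reduce ⟨U, v, hUsub, hU2, hUlt, hcoll, hv, rfl, rfl, rfl, rfl⟩ hH hF

lemma img_const {f : ℕ → ℕ} {e : Finset ℕ} (h : (e.image f).card = 1) :
    ∀ u ∈ e, ∀ u' ∈ e, f u = f u' := by
  intro u hu u' hu'
  obtain ⟨α, hα⟩ := Finset.card_eq_one.mp h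
  have h1 : f u ∈ e.image f := Finset.mem_image_of_mem f hu
  have h2 : f u' ∈ e.image f := Finset.mem_image_of_mem f hu'
  rw [hα, Finset.mem_singleton] at h1 h2
  rw [h1, h2]

lemma fiber_inU (k c : ℕ)
    (IHst : ∀ (G : ThreeGraph) (ℓ : ℕ → ℕ), Set.InjOn ℓ ↑G.verts →
      (∀ v ∈ G.verts, ℓ v < nsz k) → (∀ e ∈ G.edges, colS k (e.image ℓ) = c) → InU G) :
    ∀ (m : ℕ) (G : ThreeGraph) (ℓ : ℕ → ℕ), G.verts.card ≤ m → Set.InjOn ℓ ↑G.verts →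
    (∀ v ∈ G.verts, ℓ v < nsz k * nsz k) →
    (∀ e ∈ G.edges,
      ((e.image fun u => ℓ u / nsz k).card = 1 ∧
        colS k (e.image fun u => ℓ u % nsz k) = c) ∨
      ((e.image fun u => ℓ u / nsz k).card = 3 ∧
        colS k (e.image fun u => ℓ u / nsz k) = c)) →
    InU G := by
  have npos : 0 < nsz k := nsz_pos k
  intro m
  induction m with
  | zero =>
    intro G ℓ hcard _ _ _
    refine inU_of_edgeless (Finset.eq_empty_of_forall_notMem fun e he => ?_)
    have h3 := G.edge_card e he
    have := Finset.card_le_card (G.edge_sub e he)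
    omega
  | succ m IH =>
    intro G ℓ hcard hinj hbound htype
    by_cases hE : G.edges = ∅
    · exact inU_of_edgeless hE
    by_cases hbig : ∃ a₀ ∈ G.verts.image (fun u => ℓ u / nsz k),
        2 ≤ (G.verts.filter (fun u => ℓ u / nsz k = a₀)).card
    · obtain ⟨a₀, ha₀mem, ha₀2⟩ := hbig
      set U := G.verts.filter (fun u => ℓ u / nsz k = a₀) with hU
      have hUsub : U ⊆ G.verts := Finset.filter_subset _ _
      have ha₀lt : a₀ < nsz k := by
        obtain ⟨u₀, hu₀, hu₀a⟩ := Finset.mem_image.mp ha₀mem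
        rw [← hu₀a]
        exact Nat.div_lt_of_lt_mul (hbound u₀ hu₀)
      have hfibU : ∀ u, u ∈ U → ℓ u / nsz k = a₀ := by
        intro u hu
        rw [hU, Finset.mem_filter] at hu
        exact hu.2
      have hinterU : ∀ e ∈ G.edges, e ∩ U = e.filter (fun u => ℓ u / nsz k = a₀) := by
        intro e he
        ext u
        simp only [Finset.mem_inter, hU, Finset.mem_filter]
        exact ⟨fun ⟨q1, _, q3⟩ => ⟨q1, q3⟩, fun ⟨q1, q3⟩ => ⟨q1, G.edge_sub e he q1, q3⟩⟩
      have hcoll : ∀ e ∈ G.edges, (e ∩ U).card ≠ 2 := by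
        intro e he
        rw [hinterU e he]
        rcases htype e he with ⟨h1, _⟩ | ⟨h3, _⟩
        · by_cases hfib : ∀ u ∈ e, ℓ u / nsz k = a₀
          · rw [Finset.filter_true_of_mem hfib, G.edge_card e he]
            omega
          · push_neg at hfib
            obtain ⟨u₀, hu₀, hu₀ne⟩ := hfib
            rw [Finset.filter_false_of_mem fun u hu hua => hu₀ne
              (by rw [← img_const h1 u hu u₀ hu₀]; exact hua)]
            simp
        · have hinje : Set.InjOn (fun u => ℓ u / nsz k) ↑e := Finset.card_image_iff.mp (by
            rw [h3, G.edge_card e he])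
          have : (e.filter fun u => ℓ u / nsz k = a₀).card ≤ 1 := by
            apply Finset.card_le_one.mpr
            intro u hu u' hu'
            rw [Finset.mem_filter] at hu hu'
            exact hinje (Finset.mem_coe.mpr hu.1) (Finset.mem_coe.mpr hu'.1)
              (by show ℓ u / nsz k = ℓ u' / nsz k; rw [hu.2, hu'.2])
          omega
      by_cases hUall : U.card < G.verts.card
      · -- collapse the fiber U
        set v := (G.verts.sup id) + 1 with hv
        have hvnot : v ∉ G.verts := not_mem_verts_sup
        set ℓH : ℕ → ℕ := Function.update ℓ v (a₀ * nsz k) with hℓH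
        have hne_v : ∀ u ∈ G.verts, u ≠ v := fun u hu hne => hvnot (hne ▸ hu)
        have hℓHold : ∀ u ∈ G.verts, ℓH u = ℓ u := fun u hu =>
          Function.update_of_ne (hne_v u hu) _ _
        have hℓHv : ℓH v = a₀ * nsz k := Function.update_self _ _ _
        have hvfib : ℓH v / nsz k = a₀ := by rw [hℓHv]; exact Nat.mul_div_cancel _ npos
        refine collapse_inU hUsub ha₀2 hUall hcoll hvnot ?_ ?_
        · -- InU of collapsed graph H, via inner induction hypothesis
          set H := collapseH G U v hvnot with hH
          have hHverts : H.verts = (G.verts \ U) ∪ {v} := rfl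
          refine IH H ℓH ?_ ?_ ?_ ?_
          · -- card
            have h1 : (G.verts \ U).card = G.verts.card - U.card := Finset.card_sdiff_of_subset hUsub
            have h2 : H.verts.card ≤ (G.verts \ U).card + 1 := by
              rw [hHverts]
              exact le_trans (Finset.card_union_le _ _) (by simp)
            omega
          · -- injectivity
            intro u hu u' hu' heq
            rw [hHverts] at hu hu'
            simp only [Finset.coe_union, Finset.coe_sdiff, Finset.coe_singleton,
              Set.mem_union, Set.mem_diff, Set.mem_singleton_iff, Finset.mem_coe] at hu hu'
            rcases hu with ⟨hu1, hu2⟩ | rfl <;> rcases hu' with ⟨hu1', hu2'⟩ | rfl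
            · exact hinj (Finset.mem_coe.mpr hu1) (Finset.mem_coe.mpr hu1')
                (by rwa [hℓHold u hu1, hℓHold u' hu1'] at heq)
            · exfalso
              rw [hℓHold u hu1] at heq
              apply hu2
              rw [hU, Finset.mem_filter]
              exact ⟨hu1, by rw [heq]; exact hvfib⟩
            · exfalso
              rw [hℓHold u' hu1'] at heq
              apply hu2'
              rw [hU, Finset.mem_filter]
              exact ⟨hu1', by rw [← heq]; exact hvfib⟩
            · rfl
          · -- bound
            intro u hu
            rw [hHverts] at hu
            rcases Finset.mem_union.mp hu with h | h
            · rw [hℓHold u (Finset.mem_sdiff.mp h).1]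
              exact hbound u (Finset.mem_sdiff.mp h).1
            · rw [Finset.mem_singleton] at h
              subst h
              rw [hℓHv]
              exact (Nat.mul_lt_mul_right npos).mpr ha₀lt
          · -- edge types
            intro e' he'
            rcases Finset.mem_union.mp he' with h | h
            · have h1 := Finset.mem_filter.mp h
              have hdiv : e'.image (fun u => ℓH u / nsz k) =
                  e'.image (fun u => ℓ u / nsz k) :=
                Finset.image_congr fun u hu => by
                  rw [hℓHold u (G.edge_sub e' h1.1 hu)]
              have hmod : e'.image (fun u => ℓH u % nsz k) =
                  e'.image (fun u => ℓ u % nsz k) :=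
                Finset.image_congr fun u hu => by
                  rw [hℓHold u (G.edge_sub e' h1.1 hu)]
              rw [hdiv, hmod]
              exact htype e' h1.1
            · obtain ⟨e, he, rfl⟩ := Finset.mem_image.mp h
              have he1 := Finset.mem_filter.mp he
              obtain ⟨w, hw⟩ := Finset.card_eq_one.mp he1.2
              have hwe : w ∈ e := by
                have : w ∈ e ∩ U := hw ▸ Finset.mem_singleton_self w
                exact (Finset.mem_inter.mp this).1
              have hwU : w ∈ U := by
                have : w ∈ e ∩ U := hw ▸ Finset.mem_singleton_self w
                exact (Finset.mem_inter.mp this).2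
              have hwfib : ℓ w / nsz k = a₀ := hfibU w hwU
              -- e must be of the cross type
              have hDe : (e.image fun u => ℓ u / nsz k).card = 3 ∧
                  colS k (e.image fun u => ℓ u / nsz k) = c := by
                rcases htype e he1.1 with ⟨h1, _⟩ | hD
                · exfalso
                  have hall : ∀ u ∈ e, ℓ u / nsz k = a₀ := fun u hu => by
                    rw [img_const h1 u hu w hwe]; exact hwfib
                  have : e ∩ U = e := by
                    rw [hinterU e he1.1]
                    exact Finset.filter_true_of_mem hall
                  rw [this, G.edge_card e he1.1] at he1
                  omega
                · exact hD
              have heraseU : e \ U = e.erase w := by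
                rw [← Finset.sdiff_singleton_eq_erase, ← hw,
                  Finset.sdiff_inter_self_left]
              have himg : ((e \ U) ∪ {v}).image (fun u => ℓH u / nsz k) =
                  e.image (fun u => ℓ u / nsz k) := by
                rw [heraseU, Finset.image_union, Finset.image_singleton, hvfib]
                have h2 : (e.erase w).image (fun u => ℓH u / nsz k) =
                    (e.erase w).image (fun u => ℓ u / nsz k) :=
                  Finset.image_congr fun u hu => by
                    rw [hℓHold u (G.edge_sub e he1.1 (Finset.mem_of_mem_erase hu))]
                rw [h2]
                conv_rhs => rw [← Finset.insert_erase hwe]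
                rw [Finset.image_insert, hwfib, Finset.insert_eq, Finset.union_comm]
              right
              rw [himg]
              exact hDe
        · -- InU of fiber graph F, via the stage induction hypothesis
          refine IHst (collapseF G U) (fun u => ℓ u % nsz k) ?_ ?_ ?_
          · intro u hu u' hu' heq
            have hu1 : u ∈ U := Finset.mem_coe.mp hu
            have hu1' : u' ∈ U := Finset.mem_coe.mp hu'
            have hf : ℓ u / nsz k = a₀ := hfibU u hu1
            have hf' : ℓ u' / nsz k = a₀ := hfibU u' hu1'
            have heq' : ℓ u % nsz k = ℓ u' % nsz k := by simpa using heq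
            have : ℓ u = ℓ u' := by
              conv_lhs => rw [← Nat.div_add_mod (ℓ u) (nsz k)]
              conv_rhs => rw [← Nat.div_add_mod (ℓ u') (nsz k)]
              rw [hf, hf', heq']
            exact hinj (Finset.mem_coe.mpr (hUsub hu1)) (Finset.mem_coe.mpr (hUsub hu1')) this
          · intro u _
            exact Nat.mod_lt _ npos
          · intro e he
            have he1 := Finset.mem_filter.mp he
            rcases htype e he1.1 with ⟨_, h2⟩ | ⟨h3, _⟩
            · exact h2
            · exfalso
              have hall : ∀ u ∈ e, ℓ u / nsz k = a₀ := fun u hu => hfibU u (he1.2 hu)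
              have : e.image (fun u => ℓ u / nsz k) ⊆ {a₀} := by
                intro α hα
                obtain ⟨u, hu, rfl⟩ := Finset.mem_image.mp hα
                rw [Finset.mem_singleton]
                exact hall u hu
              have := Finset.card_le_card this
              rw [h3] at this
              simp at this
      · -- U = G.verts : all vertices in one fiber
        have hUeq : U = G.verts :=
          Finset.eq_of_subset_of_card_le hUsub (le_of_not_gt hUall)
        have hall : ∀ u ∈ G.verts, ℓ u / nsz k = a₀ := fun u hu =>
          hfibU u (hUeq ▸ hu : u ∈ U)
        refine IHst G (fun u => ℓ u % nsz k) ?_ ?_ ?_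
        · intro u hu u' hu' heq
          have hf := hall u (Finset.mem_coe.mp hu)
          have hf' := hall u' (Finset.mem_coe.mp hu')
          have heq' : ℓ u % nsz k = ℓ u' % nsz k := by simpa using heq
          have : ℓ u = ℓ u' := by
            conv_lhs => rw [← Nat.div_add_mod (ℓ u) (nsz k)]
            conv_rhs => rw [← Nat.div_add_mod (ℓ u') (nsz k)]
            rw [hf, hf', heq']
          exact hinj hu hu' this
        · intro u _
          exact Nat.mod_lt _ npos
        · intro e he
          rcases htype e he with ⟨_, h2⟩ | ⟨h3, _⟩
          · exact h2
          · exfalso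
            have : e.image (fun u => ℓ u / nsz k) ⊆ {a₀} := by
              intro α hα
              obtain ⟨u, hu, rfl⟩ := Finset.mem_image.mp hα
              rw [Finset.mem_singleton]
              exact hall u (G.edge_sub e he hu)
            have := Finset.card_le_card this
            rw [h3] at this
            simp at this
    · -- all fibers are singletons : project to fibers
      push_neg at hbig
      refine IHst G (fun u => ℓ u / nsz k) ?_ ?_ ?_
      · intro u hu u' hu' heq
        by_contra hne
        have h2 : ({u, u'} : Finset ℕ) ⊆ G.verts.filter
            (fun w => ℓ w / nsz k = ℓ u / nsz k) := by
          intro w hw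
          rcases Finset.mem_insert.mp hw with rfl | hw
          · exact Finset.mem_filter.mpr ⟨Finset.mem_coe.mp hu, rfl⟩
          · rw [Finset.mem_singleton] at hw
            subst hw
            exact Finset.mem_filter.mpr ⟨Finset.mem_coe.mp hu', by simp only at heq; omega⟩
        have h3 := Finset.card_le_card h2
        rw [Finset.card_pair hne] at h3
        exact absurd h3 (by
          have := hbig (ℓ u / nsz k)
            (Finset.mem_image.mpr ⟨u, Finset.mem_coe.mp hu, rfl⟩)
          omega)
      · intro u hu
        exact Nat.div_lt_of_lt_mul (hbound u hu)
      · intro e he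
        rcases htype e he with ⟨h1, _⟩ | ⟨_, h4⟩
        · exfalso
          obtain ⟨u₀, hu₀⟩ := Finset.card_pos.mp
            (by rw [G.edge_card e he]; omega : 0 < e.card)
          have hsub : e ⊆ G.verts.filter (fun w => ℓ w / nsz k = ℓ u₀ / nsz k) := by
            intro u hu
            exact Finset.mem_filter.mpr ⟨G.edge_sub e he hu, img_const h1 u hu u₀ hu₀⟩
          have h3 := Finset.card_le_card hsub
          rw [G.edge_card e he] at h3
          have := hbig (ℓ u₀ / nsz k)
            (Finset.mem_image.mpr ⟨u₀, G.edge_sub e he hu₀, rfl⟩)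
          omega
        · exact h4

lemma mod_lt_mod_of_div_eq {n x y : ℕ} (h : x < y) (hd : x / n = y / n) : x % n < y % n := by
  have h1 := Nat.mod_add_div x n
  have h2 := Nat.mod_add_div y n
  rw [← hd] at h2
  omega

lemma image_comp (f g : ℕ → ℕ) (e : Finset ℕ) :
    e.image (fun u => g (f u)) = (e.image f).image g := by
  rw [Finset.image_image]
  rfl

lemma stage_inU : ∀ (k : ℕ) (G : ThreeGraph) (ℓ : ℕ → ℕ) (c : ℕ), Set.InjOn ℓ ↑G.verts →
    (∀ v ∈ G.verts, ℓ v < nsz k) → (∀ e ∈ G.edges, colS k (e.image ℓ) = c) → InU G := by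
  intro k
  induction k with
  | zero =>
    intro G ℓ c hinj hbound hcol
    by_cases hE : G.edges = ∅
    · exact inU_of_edgeless hE
    have hsorted : ∀ e ∈ G.edges, ∃ x y z, x < y ∧ y < z ∧ e.image ℓ = {x,y,z} := by
      intro e he
      apply triple_sorted
      rw [Finset.card_image_of_injOn (hinj.mono (Finset.coe_subset.mpr (G.edge_sub e he)))]
      exact G.edge_card e he
    obtain ⟨e₀, he₀⟩ := Finset.nonempty_iff_ne_empty.mpr hE
    obtain ⟨x₀, y₀, z₀, hx₀, hy₀, him₀⟩ := hsorted e₀ he₀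
    have hc01 : c = 0 ∨ c = 1 := by
      have hv := hcol e₀ he₀
      rw [him₀, colS_eq hx₀ hy₀] at hv
      simp only [colT] at hv
      split_ifs at hv <;> omega
    set tgt := if c = 1 then 0 else 1 with htgt
    have hkey : ∀ e ∈ G.edges, tgt ∈ e.image ℓ := by
      intro e he
      obtain ⟨x, y, z, hx, hy, him⟩ := hsorted e he
      have hcc := hcol e he
      rw [him, colS_eq hx hy] at hcc
      simp only [colT] at hcc
      have hbd : ∀ w ∈ ({x,y,z} : Finset ℕ), w < 4 := by
        intro w hw
        rw [← him] at hw
        obtain ⟨u, hu, rfl⟩ := Finset.mem_image.mp hw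
        have := hbound u (G.edge_sub e he hu)
        simpa [nsz] using this
      have hxb := hbd x (by simp)
      have hyb := hbd y (by simp)
      have hzb := hbd z (by simp)
      rw [him]
      rcases hc01 with rfl | rfl
      · have hxne : x ≠ 0 := by
          intro h
          rw [if_pos h] at hcc
          omega
        have hx1 : x = 1 := by omega
        simp only [htgt, if_neg (by norm_num : ¬(0:ℕ) = 1)]
        simp [hx1.symm]
      · have hx0 : x = 0 := by
          by_contra h
          rw [if_neg h] at hcc
          omega
        simp only [htgt, if_pos rfl]
        simp [hx0.symm]
    refine inU_of_inU1 ⟨G.verts.filter (fun u => ℓ u = tgt), Finset.filter_subset _ _, ?_⟩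
    intro e he
    obtain ⟨u₀, hu₀, hu₀t⟩ := Finset.mem_image.mp (hkey e he)
    have hiW : e ∩ (G.verts.filter fun u => ℓ u = tgt) = {u₀} := by
      ext u
      simp only [Finset.mem_inter, Finset.mem_filter, Finset.mem_singleton]
      constructor
      · rintro ⟨h1, _, h3⟩
        exact hinj (Finset.mem_coe.mpr (G.edge_sub e he h1))
          (Finset.mem_coe.mpr (G.edge_sub e he hu₀)) (by rw [h3, hu₀t])
      · rintro rfl
        exact ⟨hu₀, G.edge_sub e he hu₀, hu₀t⟩
    rw [hiW, Finset.card_singleton]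
  | succ k IH =>
    intro G ℓ c hinj hbound hcol
    by_cases hE : G.edges = ∅
    · exact inU_of_edgeless hE
    have hsorted : ∀ e ∈ G.edges, ∃ x y z, x < y ∧ y < z ∧ e.image ℓ = {x,y,z} := by
      intro e he
      apply triple_sorted
      rw [Finset.card_image_of_injOn (hinj.mono (Finset.coe_subset.mpr (G.edge_sub e he)))]
      exact G.edge_card e he
    have hbound' : ∀ v ∈ G.verts, ℓ v < nsz k * nsz k := by
      intro v hv
      have := hbound v hv
      rwa [nsz_succ] at this
    have hfibbd : ∀ u ∈ G.verts, ℓ u / nsz k < nsz k := fun u hu =>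
      Nat.div_lt_of_lt_mul (hbound' u hu)
    by_cases hc1 : c = 2*k+2
    · -- pattern : single vertex in a lower fiber, pair in a higher fiber
      subst hc1
      apply layered_inU (fun u => ℓ u / nsz k) G.verts.card G le_rfl
      intro e he
      obtain ⟨x, y, z, hx, hy, him⟩ := hsorted e he
      have hcc := hcol e he
      rw [him, colS_eq hx hy] at hcc
      have hval : ∀ u ∈ e, ℓ u = x ∨ ℓ u = y ∨ ℓ u = z := by
        intro u hu
        have : ℓ u ∈ e.image ℓ := Finset.mem_image_of_mem ℓ hu
        rw [him] at this
        simpa using this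
      rcases colT_succ_cases hx hy hcc with ⟨_, _, h⟩ | ⟨_, _, h⟩ | ⟨h1, h2, _⟩ |
        ⟨_, _, _, h⟩
      · exact absurd h (by have := colT_lt k (x % nsz k) (y % nsz k) (z % nsz k); omega)
      · omega
      · obtain ⟨w, hwmem, hwx⟩ : ∃ w ∈ e, ℓ w = x := by
          have : x ∈ e.image ℓ := by rw [him]; simp
          obtain ⟨w, hw, hwx⟩ := Finset.mem_image.mp this
          exact ⟨w, hw, hwx⟩
        have hgyz : ∀ u ∈ e, u ≠ w → ℓ u / nsz k = y / nsz k := by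
          intro u hu hne
          rcases hval u hu with h | h | h
          · exact absurd (hinj (Finset.mem_coe.mpr (G.edge_sub e he hu))
              (Finset.mem_coe.mpr (G.edge_sub e he hwmem)) (by rw [h, hwx])) hne
          · rw [h]
          · rw [h]
            exact h1.symm
        refine ⟨w, hwmem, fun u hu u' hu' hn hn' => ?_, fun u hu hn => ?_⟩
        · rw [hgyz u hu hn, hgyz u' hu' hn']
        · rw [hwx, hgyz u hu hn]
          exact lt_of_le_of_ne (Nat.div_le_div_right hx.le) h2
      · exact absurd h (by have := colT_lt k (x / nsz k) (y / nsz k) (z / nsz k); omega)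
    by_cases hc2 : c = 2*k+3
    · -- pattern : pair in a lower fiber, single vertex in a higher fiber: flip levels
      subst hc2
      apply layered_inU (fun u => nsz k - ℓ u / nsz k) G.verts.card G le_rfl
      intro e he
      obtain ⟨x, y, z, hx, hy, him⟩ := hsorted e he
      have hcc := hcol e he
      rw [him, colS_eq hx hy] at hcc
      have hval : ∀ u ∈ e, ℓ u = x ∨ ℓ u = y ∨ ℓ u = z := by
        intro u hu
        have : ℓ u ∈ e.image ℓ := Finset.mem_image_of_mem ℓ hu
        rw [him] at this
        simpa using this
      rcases colT_succ_cases hx hy hcc with ⟨_, _, h⟩ | ⟨h1, h2, _⟩ | ⟨_, _, h⟩ |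
        ⟨_, _, _, h⟩
      · exact absurd h (by have := colT_lt k (x % nsz k) (y % nsz k) (z % nsz k); omega)
      · obtain ⟨w, hwmem, hwz⟩ : ∃ w ∈ e, ℓ w = z := by
          have : z ∈ e.image ℓ := by rw [him]; simp
          obtain ⟨w, hw, hwz⟩ := Finset.mem_image.mp this
          exact ⟨w, hw, hwz⟩
        have hzvert : ∃ uz ∈ G.verts, ℓ uz = z := ⟨w, G.edge_sub e he hwmem, hwz⟩
        have hzfib : z / nsz k < nsz k := by
          obtain ⟨uz, huz, rfl⟩ := hzvert
          exact hfibbd uz huz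
        have hgxy : ∀ u ∈ e, u ≠ w → ℓ u / nsz k = x / nsz k := by
          intro u hu hne
          rcases hval u hu with h | h | h
          · rw [h]
          · rw [h]
            exact h1.symm
          · exact absurd (hinj (Finset.mem_coe.mpr (G.edge_sub e he hu))
              (Finset.mem_coe.mpr (G.edge_sub e he hwmem)) (by rw [h, hwz])) hne
        have hltz : x / nsz k < z / nsz k := by
          have h3 : x / nsz k ≤ z / nsz k := Nat.div_le_div_right (by omega : x ≤ z)
          exact lt_of_le_of_ne h3 (fun hh => h2 hh.symm)
        refine ⟨w, hwmem, fun u hu u' hu' hn hn' => ?_, fun u hu hn => ?_⟩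
        · rw [hgxy u hu hn, hgxy u' hu' hn']
        · rw [hwz, hgxy u hu hn]
          omega
      · omega
      · exact absurd h (by have := colT_lt k (x / nsz k) (y / nsz k) (z / nsz k); omega)
    · -- recursive colors : fiber structure
      refine fiber_inU k c (fun G' ℓ' => IH G' ℓ' c) G.verts.card G ℓ le_rfl hinj hbound' ?_
      intro e he
      obtain ⟨x, y, z, hx, hy, him⟩ := hsorted e he
      have hcc := hcol e he
      rw [him, colS_eq hx hy] at hcc
      have him_div : e.image (fun u => ℓ u / nsz k) =
          {x / nsz k, y / nsz k, z / nsz k} := by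
        rw [image_comp ℓ (fun w => w / nsz k) e, him]
        simp
      have him_mod : e.image (fun u => ℓ u % nsz k) =
          {x % nsz k, y % nsz k, z % nsz k} := by
        rw [image_comp ℓ (fun w => w % nsz k) e, him]
        simp
      rcases colT_succ_cases hx hy hcc with ⟨h1, h2, h⟩ | ⟨_, _, h⟩ | ⟨_, _, h⟩ |
        ⟨h1, h2, h3, h⟩
      · left
        have hm1 : x % nsz k < y % nsz k := mod_lt_mod_of_div_eq hx h1
        have hm2 : y % nsz k < z % nsz k := mod_lt_mod_of_div_eq hy h2
        constructor
        · rw [him_div, ← h1, ← h1.trans h2]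
          simp
        · rw [him_mod, colS_eq hm1 hm2]
          exact h
      · omega
      · omega
      · right
        have hd1 : x / nsz k < y / nsz k :=
          lt_of_le_of_ne (Nat.div_le_div_right hx.le) h1
        have hd2 : y / nsz k < z / nsz k :=
          lt_of_le_of_ne (Nat.div_le_div_right hy.le) h2
        constructor
        · rw [him_div]
          exact sorted_card3 hd1 hd2
        · rw [him_div, colS_eq hd1 hd2]
          exact h

-- ### Ramsey existence

def rps (q : ℕ) : ℕ → ℕ
  | 0 => 0
  | (m+1) => q * rps q m + 1

def rp3 (q : ℕ) : ℕ → ℕ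
  | 0 => 0
  | (m+1) => rps q (rp3 q m) + 1

lemma prehom2 {q : ℕ} (hq : 0 < q) (ψ : ℕ → ℕ → Fin q) :
    ∀ (m : ℕ) (S : Finset ℕ), rps q m ≤ S.card →
    ∃ T ⊆ S, T.card = m ∧
      ∀ x ∈ T, ∀ y ∈ T, ∀ y' ∈ T, x < y → x < y' → ψ x y = ψ x y' := by
  haveI : Nonempty (Fin q) := ⟨⟨0, hq⟩⟩
  intro m
  induction m with
  | zero =>
    intro S _
    exact ⟨∅, Finset.empty_subset S, rfl, by simp⟩
  | succ m IH =>
    intro S hS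
    rw [rps] at hS
    have hSn : S.Nonempty := Finset.card_pos.mp (by omega)
    set x₀ := S.min' hSn with hx₀
    set S' := S.erase x₀ with hS'def
    have hS'card : S'.card = S.card - 1 := Finset.card_erase_of_mem (S.min'_mem hSn)
    obtain ⟨c, _, hc⟩ := Finset.exists_le_card_fiber_of_mul_le_card_of_maps_to
      (s := S') (t := Finset.univ) (f := fun a => ψ x₀ a) (n := rps q m)
      (fun a _ha => Finset.mem_univ (ψ x₀ a)) Finset.univ_nonempty
      (by rw [Finset.card_univ, Fintype.card_fin]; omega)
    obtain ⟨T', hT'sub, hT'card, hT'⟩ := IH _ hc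
    have hT'K : ∀ u ∈ T', u ∈ S' ∧ ψ x₀ u = c := by
      intro u hu
      have := hT'sub hu
      rw [Finset.mem_filter] at this
      exact this
    refine ⟨insert x₀ T', ?_, ?_, ?_⟩
    · intro u hu
      rcases Finset.mem_insert.mp hu with rfl | hu
      · exact S.min'_mem hSn
      · exact Finset.mem_of_mem_erase (hT'K u hu).1
    · rw [Finset.card_insert_of_notMem (fun hx => Finset.notMem_erase x₀ S
        (hT'K x₀ hx).1), hT'card]
    · intro x hx y hy y' hy' hxy hxy'
      have hmem : ∀ u ∈ insert x₀ T', x₀ ≤ u := by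
        intro u hu
        rcases Finset.mem_insert.mp hu with rfl | hu
        · exact le_rfl
        · exact S.min'_le u (Finset.mem_of_mem_erase (hT'K u hu).1)
      rcases Finset.mem_insert.mp hx with rfl | hx
      · have hy1 : y ∈ T' := by
          rcases Finset.mem_insert.mp hy with rfl | h
          · omega
          · exact h
        have hy1' : y' ∈ T' := by
          rcases Finset.mem_insert.mp hy' with rfl | h
          · omega
          · exact h
        rw [(hT'K y hy1).2, (hT'K y' hy1').2]
      · have hx0x : x₀ ≤ x := hmem x (Finset.mem_insert_of_mem hx)
        have hy1 : y ∈ T' := by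
          rcases Finset.mem_insert.mp hy with rfl | h
          · omega
          · exact h
        have hy1' : y' ∈ T' := by
          rcases Finset.mem_insert.mp hy' with rfl | h
          · omega
          · exact h
        exact hT' x hx y hy1 y' hy1' hxy hxy'

lemma prehom3 {q : ℕ} (hq : 0 < q) (χ : Finset ℕ → Fin q) :
    ∀ (m : ℕ) (S : Finset ℕ), rp3 q m ≤ S.card →
    ∃ T ⊆ S, T.card = m ∧
      ∀ x ∈ T, ∀ y ∈ T, ∀ z ∈ T, ∀ z' ∈ T, x < y → y < z → y < z' →
        χ {x, y, z} = χ {x, y, z'} := by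
  intro m
  induction m with
  | zero =>
    intro S _
    exact ⟨∅, Finset.empty_subset S, rfl, by simp⟩
  | succ m IH =>
    intro S hS
    rw [rp3] at hS
    have hSn : S.Nonempty := Finset.card_pos.mp (by omega)
    set x₀ := S.min' hSn with hx₀
    set S' := S.erase x₀ with hS'def
    have hS'card : S'.card = S.card - 1 := Finset.card_erase_of_mem (S.min'_mem hSn)
    obtain ⟨T₁, hT₁sub, hT₁card, hT₁⟩ :=
      prehom2 hq (fun u w => χ {x₀, u, w}) (rp3 q m) S' (by omega)
    obtain ⟨T₂, hT₂sub, hT₂card, hT₂⟩ := IH T₁ (by omega)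
    refine ⟨insert x₀ T₂, ?_, ?_, ?_⟩
    · intro u hu
      rcases Finset.mem_insert.mp hu with rfl | hu
      · exact S.min'_mem hSn
      · exact Finset.mem_of_mem_erase (hT₁sub (hT₂sub hu))
    · rw [Finset.card_insert_of_notMem (fun hx => Finset.notMem_erase x₀ S
        (hT₁sub (hT₂sub hx))), hT₂card]
    · intro x hx y hy z hz z' hz' hxy hyz hyz'
      have hmem : ∀ u ∈ insert x₀ T₂, x₀ ≤ u := by
        intro u hu
        rcases Finset.mem_insert.mp hu with rfl | hu
        · exact le_rfl
        · exact S.min'_le u (Finset.mem_of_mem_erase (hT₁sub (hT₂sub hu)))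
      have hyx₀ : x₀ ≤ x := hmem x hx
      have hin : ∀ u ∈ insert x₀ T₂, x < u → u ∈ T₂ := by
        intro u hu hlt
        rcases Finset.mem_insert.mp hu with rfl | hu
        · omega
        · exact hu
      have hy2 : y ∈ T₂ := hin y hy hxy
      have hz2 : z ∈ T₂ := hin z hz (hxy.trans hyz)
      have hz2' : z' ∈ T₂ := hin z' hz' (hxy.trans hyz')
      rcases Finset.mem_insert.mp hx with rfl | hx2
      · exact hT₁ y (hT₂sub hy2) z (hT₂sub hz2) z' (hT₂sub hz2') hyz hyz'
      · exact hT₂ x hx2 y hy2 z hz2 z' hz2' hxy hyz hyz'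

lemma mono2 {q : ℕ} (hq : 0 < q) (ψ : ℕ → ℕ → Fin q) (s : ℕ)
    (S : Finset ℕ) (hS : rps q (q * s + 1) ≤ S.card) :
    ∃ K ⊆ S, s ≤ K.card ∧ ∃ c, ∀ x ∈ K, ∀ y ∈ K, x < y → ψ x y = c := by
  haveI : Nonempty (Fin q) := ⟨⟨0, hq⟩⟩
  obtain ⟨T, hTS, hTcard, hT⟩ := prehom2 hq ψ (q*s+1) S hS
  have hTne : T.Nonempty := Finset.card_pos.mp (by omega)
  set M := T.max' hTne with hM
  set T' := T.erase M with hT'def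
  set ν : ℕ → ℕ := fun y => if h : (T.filter fun w => y < w).Nonempty
      then (T.filter fun w => y < w).min' h else 0 with hν
  have hνmem : ∀ x ∈ T', ν x ∈ T ∧ x < ν x := by
    intro x hx
    have hxT : x ∈ T := Finset.mem_of_mem_erase hx
    have hne : (T.filter fun w => x < w).Nonempty :=
      ⟨M, Finset.mem_filter.mpr ⟨T.max'_mem hTne,
        lt_of_le_of_ne (T.le_max' x hxT) (Finset.ne_of_mem_erase hx)⟩⟩
    have h1 : ν x = (T.filter fun w => x < w).min' hne := by
      rw [hν]
      exact dif_pos hne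
    have h2 := (T.filter fun w => x < w).min'_mem hne
    rw [Finset.mem_filter] at h2
    rw [h1]
    exact h2
  have hT'card : T'.card = T.card - 1 := Finset.card_erase_of_mem (T.max'_mem hTne)
  obtain ⟨c, _, hc⟩ := Finset.exists_le_card_fiber_of_mul_le_card_of_maps_to
    (s := T') (t := Finset.univ) (f := fun a => ψ a (ν a)) (n := s)
    (fun a _ha => Finset.mem_univ (ψ a (ν a))) Finset.univ_nonempty
    (by rw [Finset.card_univ, Fintype.card_fin]; omega)
  refine ⟨T'.filter (fun a => ψ a (ν a) = c), ?_, hc, c, ?_⟩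
  · exact (Finset.filter_subset _ _).trans ((Finset.erase_subset _ _).trans hTS)
  · intro x hx y hy hxy
    rw [Finset.mem_filter] at hx hy
    have hx' := hx.1
    have hxT : x ∈ T := Finset.mem_of_mem_erase hx'
    have hyT : y ∈ T := Finset.mem_of_mem_erase hy.1
    obtain ⟨hνT, hνlt⟩ := hνmem x hx'
    rw [← hx.2]
    exact hT x hxT y hyT (ν x) hνT hxy hνlt

lemma mono3 {q : ℕ} (hq : 0 < q) (χ : Finset ℕ → Fin q) (s : ℕ)
    (S : Finset ℕ) (hS : rp3 q (rps q (q * s + 1) + 1) ≤ S.card) :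
    ∃ K ⊆ S, s ≤ K.card ∧ ∃ c, ∀ x ∈ K, ∀ y ∈ K, ∀ z ∈ K,
      x < y → y < z → χ {x, y, z} = c := by
  obtain ⟨T, hTS, hTcard, hT⟩ := prehom3 hq χ (rps q (q*s+1) + 1) S hS
  have hTne : T.Nonempty := Finset.card_pos.mp (by omega)
  set M := T.max' hTne with hM
  set T' := T.erase M with hT'def
  set ν : ℕ → ℕ := fun y => if h : (T.filter fun w => y < w).Nonempty
      then (T.filter fun w => y < w).min' h else 0 with hν
  have hνmem : ∀ x ∈ T', ν x ∈ T ∧ x < ν x := by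
    intro x hx
    have hxT : x ∈ T := Finset.mem_of_mem_erase hx
    have hne : (T.filter fun w => x < w).Nonempty :=
      ⟨M, Finset.mem_filter.mpr ⟨T.max'_mem hTne,
        lt_of_le_of_ne (T.le_max' x hxT) (Finset.ne_of_mem_erase hx)⟩⟩
    have h1 : ν x = (T.filter fun w => x < w).min' hne := by
      rw [hν]
      exact dif_pos hne
    have h2 := (T.filter fun w => x < w).min'_mem hne
    rw [Finset.mem_filter] at h2
    rw [h1]
    exact h2
  have hT'card : T'.card = T.card - 1 := Finset.card_erase_of_mem (T.max'_mem hTne)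
  obtain ⟨K, hKsub, hKcard, c, hK⟩ := mono2 hq (fun x y => χ {x, y, ν y}) s T' (by omega)
  refine ⟨K, hKsub.trans ((Finset.erase_subset _ _).trans hTS), hKcard, c, ?_⟩
  intro x hx y hy z hz hxy hyz
  have hxT : x ∈ T := Finset.mem_of_mem_erase (hKsub hx)
  have hyT' : y ∈ T' := hKsub hy
  have hyT : y ∈ T := Finset.mem_of_mem_erase hyT'
  have hzT : z ∈ T := Finset.mem_of_mem_erase (hKsub hz)
  obtain ⟨hνT, hνlt⟩ := hνmem y hyT'
  have h1 : χ {x, y, z} = χ {x, y, ν y} := hT x hxT y hyT z hzT (ν y) hνT hxy hyz hνlt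
  rw [h1]
  exact hK x hx y hy hxy

-- ### final assembly

lemma colS_lt {k : ℕ} {T : Finset ℕ} (h : T.card = 3) : colS k T < 2 * k + 2 := by
  obtain ⟨x, y, z, hx, hy, rfl⟩ := triple_sorted h
  rw [colS_eq hx hy]
  exact colT_lt k x y z

lemma ramseyProp_exists (q : ℕ) (hq : 0 < q) (G : ThreeGraph) :
    ∃ N, RamseyProp (fun _ : Fin q => G) N := by
  haveI : Nonempty (Fin q) := ⟨⟨0, hq⟩⟩
  set s := G.verts.card with hs
  set N := rp3 q (rps q (q * s + 1) + 1) + 1 with hN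
  have npos : 0 < N := by omega
  refine ⟨N, fun χ => ?_⟩
  set toFin : ℕ → Fin N := fun m => ⟨m % N, Nat.mod_lt _ npos⟩ with htoFin
  set χ' : Finset ℕ → Fin q := fun P => χ (P.image toFin) with hχ'
  obtain ⟨K, hKsub, hKcard, c, hK⟩ := mono3 hq χ' s (Finset.range N)
    (by rw [Finset.card_range]; omega)
  obtain ⟨T₂, hT₂sub, hT₂card⟩ := Finset.exists_subset_card_eq hKcard
  have hT₂range : ∀ u ∈ T₂, u < N := fun u hu =>
    Finset.mem_range.mp (hKsub (hT₂sub hu))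
  have hcardeq : Fintype.card ↥G.verts = Fintype.card ↥T₂ := by
    rw [Fintype.card_coe, Fintype.card_coe, hT₂card]
  set φ : ↥G.verts ≃ ↥T₂ := Fintype.equivOfCardEq hcardeq with hφ
  set g : ℕ → ℕ := fun m => if h : m ∈ G.verts then ((φ ⟨m, h⟩ : ↥T₂) : ℕ) else 0 with hg
  set f : ℕ → Fin N := fun m => toFin (g m) with hf
  have hgmem : ∀ m ∈ G.verts, g m ∈ T₂ := by
    intro m hm
    rw [hg]
    simp only [dif_pos hm]
    exact (φ ⟨m, hm⟩).2
  have hginj : Set.InjOn g ↑G.verts := by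
    intro u hu w hw heq
    have hu' : u ∈ G.verts := Finset.mem_coe.mp hu
    have hw' : w ∈ G.verts := Finset.mem_coe.mp hw
    rw [hg] at heq
    simp only [dif_pos hu', dif_pos hw'] at heq
    have := φ.injective (Subtype.ext heq)
    exact congrArg Subtype.val this
  have hglt : ∀ m ∈ G.verts, g m < N := fun m hm => hT₂range _ (hgmem m hm)
  refine ⟨c, f, ?_, ?_⟩
  · intro u hu w hw heq
    apply hginj hu hw
    have hu' : u ∈ G.verts := Finset.mem_coe.mp hu
    have hw' : w ∈ G.verts := Finset.mem_coe.mp hw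
    have h1 : g u % N = g u := Nat.mod_eq_of_lt (hglt u hu')
    have h2 : g w % N = g w := Nat.mod_eq_of_lt (hglt w hw')
    have := congrArg Fin.val heq
    rw [hf] at this
    simp only [htoFin] at this
    rw [h1, h2] at this
    exact this
  · intro e he
    have hesub := G.edge_sub e he
    have himg : e.image f = (e.image g).image toFin := by
      rw [Finset.image_image]
      rfl
    have hgcard : (e.image g).card = 3 := by
      rw [Finset.card_image_of_injOn (hginj.mono (Finset.coe_subset.mpr hesub)),
        G.edge_card e he]
    obtain ⟨x, y, z, hxy, hyz, him⟩ := triple_sorted hgcard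
    have hmemT : ∀ w ∈ ({x, y, z} : Finset ℕ), w ∈ K := by
      intro w hw
      rw [← him] at hw
      obtain ⟨u, hu, rfl⟩ := Finset.mem_image.mp hw
      exact hT₂sub (hgmem u (hesub hu))
    have : χ' (e.image g) = c := by
      rw [him]
      exact hK x (hmemT x (by simp)) y (hmemT y (by simp)) z (hmemT z (by simp)) hxy hyz
    rw [himg]
    exact this


/-- For every even `q ≥ 2` and every 3-uniform hypergraph `G` not in `𝒰`,
`r(G; q) > 2 ^ (2 ^ (q/2))`. -/
theorem stmt5 (q : ℕ) (hq : 2 ≤ q) (hev : Even q) (G : ThreeGraph) (hG : ¬ InU G) :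
    2 ^ 2 ^ (q / 2) < rq G q := by
  obtain ⟨t, hqt⟩ := hev
  have ht1 : 1 ≤ t := by omega
  have hq2 : q / 2 = t := by omega
  have hnsz : nsz (t - 1) = 2 ^ 2 ^ t := by
    unfold nsz
    congr 2
    omega
  have hq0 : 0 < q := by omega
  obtain ⟨M, hM⟩ := ramseyProp_exists q hq0 G
  have hSne : {N | RamseyProp (fun _ : Fin q => G) N}.Nonempty := ⟨M, hM⟩
  have hmem : sInf {N | RamseyProp (fun _ : Fin q => G) N} ∈
      {N | RamseyProp (fun _ : Fin q => G) N} := Nat.sInf_mem hSne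
  have hgt : ∀ N, RamseyProp (fun _ : Fin q => G) N → 2 ^ 2 ^ t < N := by
    intro N hN
    by_contra hle
    push_neg at hle
    set χ : Finset (Fin N) → Fin q :=
      fun T => ⟨colS (t - 1) (T.image Fin.val) % q, Nat.mod_lt _ hq0⟩ with hχ
    obtain ⟨i, f, hfinj, hfcol⟩ := hN χ
    apply hG
    refine stage_inU (t - 1) G (fun m => (f m).val) i.val ?_ ?_ ?_
    · intro u hu w hw heq
      exact hfinj hu hw (Fin.val_injective heq)
    · intro v hv
      rw [hnsz]
      exact lt_of_lt_of_le (f v).isLt hle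
    · intro e he
      have hecard : (e.image fun m => (f m).val).card = 3 := by
        rw [Finset.card_image_of_injOn (fun u hu w hw heq =>
          hfinj (Finset.mem_coe.mpr (G.edge_sub e he (Finset.mem_coe.mp hu)))
            (Finset.mem_coe.mpr (G.edge_sub e he (Finset.mem_coe.mp hw)))
            (Fin.val_injective heq)), G.edge_card e he]
      have hlt : colS (t - 1) (e.image fun m => (f m).val) < q := by
        have := colS_lt (k := t - 1) hecard
        omega
      have hcc := hfcol e he
      rw [hχ] at hcc
      have hval := congrArg Fin.val hcc
      simp only at hval
      have himg : (e.image f).image Fin.val = e.image fun m => (f m).val := by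
        rw [Finset.image_image]
        rfl
      rw [himg, Nat.mod_eq_of_lt hlt] at hval
      exact hval
  have hfin : 2 ^ 2 ^ t < sInf {N | RamseyProp (fun _ : Fin q => G) N} :=
    hgt _ hmem
  rw [hq2]
  exact hfin
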